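/- Let γ, σ, v > 0, let y_f > 0 with v/σ < y_f, and let f : ℝ → ℝ be continuous, nondecreasing, with f(y) = 0 for y ≤ y_f and f(y) > 0 for y > y_f. Let (x, y, L) : [0,∞) → ℝ³ be a differentiable solution of ẋ = (1/L)(v − γxy), ẏ = γxy − σy, L̇ = f(y) with x(0), y(0), L(0) > 0. Then either L(t) → ∞ as t → ∞, or there exist a stopping time T* > 0 and a final length L* > 0 such that L(t) = L* for all t ≥ T*; in the latter case x(t) → σ/γ and y(t) → v/σ as t → ∞. -/

import Mathlib

open Filter

open Set


/-- Mean value inequality / monotone helper. -/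
lemma pg_mono_of_deriv_nonneg {g g' : ℝ → ℝ} {a : ℝ}
    (hg : ∀ t, a ≤ t → HasDerivAt g (g' t) t) (h0 : ∀ t, a ≤ t → 0 ≤ g' t) :
    ∀ s t, a ≤ s → s ≤ t → g s ≤ g t := by
  intro s t hs hst
  rcases eq_or_lt_of_le hst with rfl | h
  · exact le_refl _
  · have hcont : ContinuousOn g (Icc s t) := fun u hu =>
      (hg u (le_trans hs hu.1)).continuousAt.continuousWithinAt
    have hderiv : ∀ u ∈ Ioo s t, HasDerivAt g (g' u) u := fun u hu =>
      hg u (le_trans hs hu.1.le)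
    obtain ⟨c, hc, hslope⟩ := exists_hasDerivAt_eq_slope g g' h hcont hderiv
    have h1 : 0 ≤ g' c := h0 c (le_trans hs hc.1.le)
    rw [hslope] at h1
    have ht : 0 < t - s := by linarith
    have := (div_nonneg_iff.mp h1)
    rcases this with ⟨h2,_⟩|⟨_,h3⟩ <;> linarith

lemma pg_const_of_deriv_zero {g : ℝ → ℝ} {a : ℝ}
    (hg : ∀ t, a ≤ t → HasDerivAt g 0 t) :
    ∀ t, a ≤ t → g t = g a := by
  intro t ht
  have h1 := pg_mono_of_deriv_nonneg (g' := fun _ => (0:ℝ)) hg (fun _ _ => le_refl 0) a t le_rfl ht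
  have h2 := pg_mono_of_deriv_nonneg (g := fun u => -g u) (g' := fun _ => (0:ℝ))
    (fun u hu => (hg u hu).neg.congr_deriv (by simp)) (fun _ _ => le_refl 0) a t le_rfl ht
  simp at h2; linarith

/-- Lipschitz bound from a bounded derivative on `[a, ∞)`. -/
lemma pg_lip_of_deriv {g g' : ℝ → ℝ} {a K : ℝ}
    (hg : ∀ t, a ≤ t → HasDerivAt g (g' t) t) (hK : ∀ t, a ≤ t → |g' t| ≤ K) :
    ∀ s t, a ≤ s → a ≤ t → |g s - g t| ≤ K * |s - t| := by
  have main : ∀ s t, a ≤ s → s < t → |g s - g t| ≤ K * |s - t| := by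
    intro s t hs hst
    have hcont : ContinuousOn g (Icc s t) := fun u hu =>
      (hg u (le_trans hs hu.1)).continuousAt.continuousWithinAt
    obtain ⟨c, hc, hslope⟩ := exists_hasDerivAt_eq_slope g g' hst hcont
      (fun u hu => hg u (le_trans hs hu.1.le))
    have h1 : |g' c| ≤ K := hK c (le_trans hs hc.1.le)
    rw [hslope, abs_div] at h1
    have ht : 0 < t - s := by linarith
    rw [abs_of_pos ht] at h1
    have := (div_le_iff₀ ht).mp h1
    rw [abs_sub_comm, abs_sub_comm s t, abs_of_pos ht]
    linarith
  intro s t hs ht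
  rcases lt_trichotomy s t with h | rfl | h
  · exact main s t hs h
  · have : K * 0 ≤ K * |s - s| := by simp
    have hK0 : 0 ≤ K := le_trans (abs_nonneg _) (hK s hs)
    simp
  · have := main t s ht h
    rwa [abs_sub_comm, abs_sub_comm t s] at this

/-- Barbalat-type lemma: if `g → c` and `g'` is uniformly continuous on `[0,∞)`,
then `g' → 0`. -/
lemma pg_barbalat {g g' : ℝ → ℝ} {c : ℝ}
    (hg : ∀ t, 0 ≤ t → HasDerivAt g (g' t) t)
    (huc : ∀ ε > (0:ℝ), ∃ δ > (0:ℝ), ∀ s t, 0 ≤ s → 0 ≤ t → |s - t| ≤ δ → |g' s - g' t| ≤ ε)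
    (hconv : Tendsto g atTop (nhds c)) : Tendsto g' atTop (nhds 0) := by
  rw [Metric.tendsto_atTop]
  intro ε hε
  obtain ⟨δ, hδ, hucd⟩ := huc (ε/4) (by linarith)
  obtain ⟨N, hN⟩ := Metric.tendsto_atTop.mp hconv (ε*δ/16) (by positivity)
  refine ⟨max N 0, fun t ht => ?_⟩
  have ht0 : 0 ≤ t := le_trans (le_max_right N 0) ht
  have htN : N ≤ t := le_trans (le_max_left N 0) ht
  rw [Real.dist_eq, sub_zero]
  by_contra hcon
  push_neg at hcon
  -- |g' t| ≥ ε ; show contradiction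
  have hlt : t < t + δ := by linarith
  have hcont : ContinuousOn g (Icc t (t+δ)) := fun u hu =>
    (hg u (le_trans ht0 hu.1)).continuousAt.continuousWithinAt
  obtain ⟨ξ, hξ, hslope⟩ := exists_hasDerivAt_eq_slope g g' hlt hcont
    (fun u hu => hg u (le_trans ht0 hu.1.le))
  have hξ0 : 0 ≤ ξ := le_trans ht0 hξ.1.le
  have hclose : |g' ξ - g' t| ≤ ε/4 := by
    apply hucd ξ t hξ0 ht0
    rw [abs_sub_comm, abs_of_nonpos (by linarith [hξ.1, hξ.2] : t - ξ ≤ 0)]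
    linarith [hξ.2.le]
  have hgt1 : dist (g (t+δ)) c < ε*δ/16 := hN (t+δ) (by linarith)
  have hgt2 : dist (g t) c < ε*δ/16 := hN t htN
  have hdiff : |g (t+δ) - g t| < ε*δ/8 := by
    rw [Real.dist_eq] at hgt1 hgt2
    calc |g (t+δ) - g t| = |(g (t+δ) - c) - (g t - c)| := by ring_nf
      _ ≤ |g (t+δ) - c| + |g t - c| := abs_sub _ _
      _ < ε*δ/8 := by linarith
  have hslopebd : |g' ξ| < ε/8 := by
    rw [hslope, abs_div, abs_of_pos (by linarith : (0:ℝ) < t + δ - t)]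
    rw [div_lt_iff₀ (by linarith : (0:ℝ) < t + δ - t)]
    have : t + δ - t = δ := by ring
    rw [this]
    calc |g (t+δ) - g t| < ε*δ/8 := hdiff
      _ = ε/8 * δ := by ring
  have h3 : |g' t| - |g' ξ| ≤ |g' ξ - g' t| := by
    have := abs_sub_abs_le_abs_sub (g' t) (g' ξ)
    rwa [abs_sub_comm] at this
  linarith [hclose, hslopebd, hcon]

noncomputable def Gfn (ys z : ℝ) : ℝ := z - ys - ys * Real.log (z / ys)

lemma Gfn_deriv {ys z : ℝ} (hys : 0 < ys) (hz : 0 < z) :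
    HasDerivAt (Gfn ys) (1 - ys / z) z := by
  have h1 : HasDerivAt (fun w : ℝ => w / ys) (1 / ys) z := by
    simpa using (hasDerivAt_id z).div_const ys
  have h2 : HasDerivAt (fun w : ℝ => Real.log (w / ys)) ((z / ys)⁻¹ * (1 / ys)) z :=
    (Real.hasDerivAt_log (by positivity)).comp z h1
  have h3 : HasDerivAt (fun w : ℝ => w - ys - ys * Real.log (w / ys))
      (1 - ys * ((z / ys)⁻¹ * (1 / ys))) z := by
    exact ((hasDerivAt_id z).sub_const ys).sub (h2.const_mul ys)
  refine h3.congr_deriv ?_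
  field_simp

lemma Gfn_nonneg {ys z : ℝ} (hys : 0 < ys) (hz : 0 < z) : 0 ≤ Gfn ys z := by
  have h := Real.log_le_sub_one_of_pos (show 0 < z / ys by positivity)
  have : ys * Real.log (z / ys) ≤ ys * (z / ys - 1) := by
    apply mul_le_mul_of_nonneg_left h hys.le
  have h2 : ys * (z / ys - 1) = z - ys := by field_simp
  unfold Gfn; linarith [h2 ▸ this]

lemma Gfn_ge_sq {ys z : ℝ} (hys : 0 < ys) (hz : 0 < z) :
    (Real.sqrt z - Real.sqrt ys)^2 ≤ Gfn ys z := by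
  have hw : (0:ℝ) < z / ys := by positivity
  have h1 : Real.log (z / ys) = 2 * Real.log (Real.sqrt (z / ys)) := by
    rw [Real.log_sqrt hw.le]; ring
  have h2 : Real.log (Real.sqrt (z / ys)) ≤ Real.sqrt (z / ys) - 1 :=
    Real.log_le_sub_one_of_pos (Real.sqrt_pos.mpr hw)
  have h3 : Real.sqrt (z / ys) = Real.sqrt z / Real.sqrt ys := Real.sqrt_div' z hys.le ▸ by
    rw [Real.sqrt_div hz.le]
  have hsy : (0:ℝ) < Real.sqrt ys := Real.sqrt_pos.mpr hys
  have h4 : ys * Real.log (z / ys) ≤ 2 * ys * (Real.sqrt z / Real.sqrt ys - 1) := by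
    rw [h1]; nlinarith [h3 ▸ h2]
  have h5 : ys * (Real.sqrt z / Real.sqrt ys) = Real.sqrt ys * Real.sqrt z := by
    rw [eq_comm, mul_comm ys]
    rw [div_mul_eq_mul_div, eq_comm, div_eq_iff (ne_of_gt hsy)]
    nlinarith [Real.sq_sqrt hys.le, Real.sqrt_nonneg ys, Real.sqrt_nonneg z]
  have hsz : Real.sqrt z ^ 2 = z := Real.sq_sqrt hz.le
  have hsy2 : Real.sqrt ys ^ 2 = ys := Real.sq_sqrt hys.le
  unfold Gfn
  nlinarith [h4, h5]


-- lower bound forcing z away from 0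
lemma Gfn_lb_small {ys z CG : ℝ} (hys : 0 < ys) (hz : 0 < z)
    (hG : Gfn ys z ≤ CG) : ys * Real.exp (-(CG + ys)/ys) ≤ z := by
  by_contra hcon
  push_neg at hcon
  have h1 : Real.log (z / ys) < -(CG + ys)/ys := by
    have : z / ys < Real.exp (-(CG + ys)/ys) := by
      rw [div_lt_iff₀ hys]; linarith [hcon]
    calc Real.log (z/ys) < Real.log (Real.exp (-(CG+ys)/ys)) :=
          Real.log_lt_log (by positivity) this
      _ = -(CG+ys)/ys := Real.log_exp _
  have h2 : ys * Real.log (z / ys) < ys * (-(CG + ys)/ys) :=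
    mul_lt_mul_of_pos_left h1 hys
  have h3 : ys * (-(CG + ys)/ys) = -(CG + ys) := by field_simp
  unfold Gfn at hG
  nlinarith

def UC0 (g : ℝ → ℝ) : Prop :=
  ∀ ε > (0:ℝ), ∃ δ > (0:ℝ), ∀ s t, 0 ≤ s → 0 ≤ t → |s - t| ≤ δ → |g s - g t| ≤ ε

lemma pg_uc_of_lip {g : ℝ → ℝ} {K : ℝ}
    (h : ∀ s t, 0 ≤ s → 0 ≤ t → |g s - g t| ≤ K * |s - t|) : UC0 g := by
  intro ε hε
  refine ⟨ε / max K 1, by positivity, fun s t hs ht hst => ?_⟩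
  have hK1 : (0:ℝ) < max K 1 := lt_of_lt_of_le one_pos (le_max_right K 1)
  calc |g s - g t| ≤ K * |s - t| := h s t hs ht
    _ ≤ max K 1 * (ε / max K 1) := by
        apply mul_le_mul (le_max_left K 1) hst (abs_nonneg _) hK1.le
    _ = ε := by field_simp

lemma pg_uc_neg {g : ℝ → ℝ} (h : UC0 g) : UC0 (fun t => -g t) := by
  intro ε hε
  obtain ⟨δ, hδ, hd⟩ := h ε hε
  exact ⟨δ, hδ, fun s t hs ht hst => by
    have := hd s t hs ht hst
    rwa [show -g s - -g t = -(g s - g t) by ring, abs_neg]⟩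

lemma pg_uc_add {g h : ℝ → ℝ} (hg : UC0 g) (hh : UC0 h) : UC0 (fun t => g t + h t) := by
  intro ε hε
  obtain ⟨δ1, hδ1, hd1⟩ := hg (ε/2) (by linarith)
  obtain ⟨δ2, hδ2, hd2⟩ := hh (ε/2) (by linarith)
  refine ⟨min δ1 δ2, lt_min hδ1 hδ2, fun s t hs ht hst => ?_⟩
  have h1 := hd1 s t hs ht (le_trans hst (min_le_left _ _))
  have h2 := hd2 s t hs ht (le_trans hst (min_le_right _ _))
  calc |g s + h s - (g t + h t)| = |(g s - g t) + (h s - h t)| := by ring_nf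
    _ ≤ |g s - g t| + |h s - h t| := abs_add_le _ _
    _ ≤ ε := by linarith

lemma pg_uc_mul_bdd {g h : ℝ → ℝ} {Mg Mh : ℝ} (hg : UC0 g) (hh : UC0 h)
    (hbg : ∀ t, 0 ≤ t → |g t| ≤ Mg) (hbh : ∀ t, 0 ≤ t → |h t| ≤ Mh) :
    UC0 (fun t => g t * h t) := by
  intro ε hε
  have hMg : 0 ≤ Mg := le_trans (abs_nonneg _) (hbg 0 le_rfl)
  have hMh : 0 ≤ Mh := le_trans (abs_nonneg _) (hbh 0 le_rfl)
  obtain ⟨δ1, hδ1, hd1⟩ := hg (ε/(2*(Mh+1))) (by positivity)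
  obtain ⟨δ2, hδ2, hd2⟩ := hh (ε/(2*(Mg+1))) (by positivity)
  refine ⟨min δ1 δ2, lt_min hδ1 hδ2, fun s t hs ht hst => ?_⟩
  have h1 := hd1 s t hs ht (le_trans hst (min_le_left _ _))
  have h2 := hd2 s t hs ht (le_trans hst (min_le_right _ _))
  have key : |g s * h s - g t * h t| ≤ |g s| * |h s - h t| + |h t| * |g s - g t| := by
    calc |g s * h s - g t * h t| = |g s * (h s - h t) + h t * (g s - g t)| := by ring_nf
      _ ≤ |g s * (h s - h t)| + |h t * (g s - g t)| := abs_add_le _ _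
      _ = |g s| * |h s - h t| + |h t| * |g s - g t| := by rw [abs_mul, abs_mul]
  have e1 : |g s| * |h s - h t| ≤ Mg * (ε/(2*(Mg+1))) :=
    mul_le_mul (hbg s hs) h2 (abs_nonneg _) hMg
  have e2 : |h t| * |g s - g t| ≤ Mh * (ε/(2*(Mh+1))) :=
    mul_le_mul (hbh t ht) h1 (abs_nonneg _) hMh
  have e3 : Mg * (ε/(2*(Mg+1))) ≤ ε/2 := by
    rw [mul_div_assoc' , div_le_div_iff₀ (by positivity) (by norm_num)]
    nlinarith
  have e4 : Mh * (ε/(2*(Mh+1))) ≤ ε/2 := by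
    rw [mul_div_assoc', div_le_div_iff₀ (by positivity) (by norm_num)]
    nlinarith
  calc |g s * h s - g t * h t| ≤ |g s| * |h s - h t| + |h t| * |g s - g t| := key
    _ ≤ ε := by linarith


lemma pg_uc_comp_cont {f : ℝ → ℝ} (hf : Continuous f) {y : ℝ → ℝ} {Ky a b : ℝ}
    (hlip : ∀ s t, 0 ≤ s → 0 ≤ t → |y s - y t| ≤ Ky * |s - t|)
    (hmem : ∀ t, 0 ≤ t → y t ∈ Icc a b) : UC0 (fun t => f (y t)) := by
  have huc : UniformContinuousOn f (Icc a b) :=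
    isCompact_Icc.uniformContinuousOn_of_continuous hf.continuousOn
  intro ε hε
  obtain ⟨δf, hδf, hd⟩ := Metric.uniformContinuousOn_iff.mp huc ε hε
  refine ⟨δf / (2 * max Ky 1), by positivity, fun s t hs ht hst => ?_⟩
  have hK1 : (0:ℝ) < max Ky 1 := lt_of_lt_of_le one_pos (le_max_right _ _)
  have hyd : |y s - y t| < δf := by
    calc |y s - y t| ≤ Ky * |s - t| := hlip s t hs ht
      _ ≤ max Ky 1 * (δf / (2 * max Ky 1)) :=
          mul_le_mul (le_max_left _ _) hst (abs_nonneg _) hK1.le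
      _ = δf / 2 := by field_simp
      _ < δf := by linarith
  have := hd (y s) (hmem s hs) (y t) (hmem t ht) (by rwa [Real.dist_eq])
  rw [Real.dist_eq] at this
  exact this.le



lemma Gfn_ub {ys z CG : ℝ} (hys : 0 < ys) (hz : 0 < z) (hCG : 0 ≤ CG)
    (hsq : (Real.sqrt z - Real.sqrt ys)^2 ≤ CG) :
    z ≤ (Real.sqrt ys + Real.sqrt CG)^2 := by
  have h1 : |Real.sqrt z - Real.sqrt ys| ≤ Real.sqrt CG := by
    rw [← Real.sqrt_sq_eq_abs]
    exact Real.sqrt_le_sqrt hsq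
  have h2 : Real.sqrt z ≤ Real.sqrt ys + Real.sqrt CG := by
    have := abs_le.mp h1
    linarith [this.2]
  calc z = Real.sqrt z ^ 2 := (Real.sq_sqrt hz.le).symm
    _ ≤ (Real.sqrt ys + Real.sqrt CG)^2 := by
        apply pow_le_pow_left₀ (Real.sqrt_nonneg z) h2

lemma Gfn_lip {ys m : ℝ} (hys : 0 < ys) (hm : 0 < m) :
    ∀ p q, m ≤ p → m ≤ q → |Gfn ys p - Gfn ys q| ≤ (1 + ys / m) * |p - q| := by
  have hlip : ∀ t, m ≤ t → HasDerivAt (Gfn ys) ((fun z => 1 - ys / z) t) t :=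
    fun t ht => Gfn_deriv hys (lt_of_lt_of_le hm ht)
  have hbd : ∀ t, m ≤ t → |(fun z => 1 - ys / z) t| ≤ 1 + ys / m := by
    intro t ht
    have htp : 0 < t := lt_of_lt_of_le hm ht
    have h1 : 0 < ys / t := by positivity
    have h2 : ys / t ≤ ys / m := by
      apply div_le_div_of_nonneg_left hys.le hm ht
    rw [abs_le]; constructor <;> simp <;> linarith
  exact fun p q hp hq => pg_lip_of_deriv hlip hbd p q hp hq

lemma pg_tendsto_of_anti {V : ℝ → ℝ}
    (hanti : ∀ s t, 0 ≤ s → s ≤ t → V t ≤ V s) (hlb : ∀ t, 0 ≤ t → 0 ≤ V t) :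
    ∃ c, Tendsto V atTop (nhds c) := by
  have hW : Antitone (fun t => V (max t 0)) := by
    intro s t hst
    exact hanti (max s 0) (max t 0) (le_max_right _ _) (max_le_max hst le_rfl)
  have hbdd : BddBelow (range fun t => V (max t 0)) :=
    ⟨0, fun z ⟨t, ht⟩ => ht ▸ hlb _ (le_max_right _ _)⟩
  refine ⟨_, (tendsto_atTop_ciInf hW hbdd).congr' ?_⟩
  filter_upwards [eventually_ge_atTop (0:ℝ)] with t ht
  simp [max_eq_left ht]

lemma pg_uc_const (c : ℝ) : UC0 (fun _ => c) :=
  pg_uc_of_lip (K := 0) (fun s t _ _ => by simp)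

lemma pg_abs_mul_le {g h : ℝ → ℝ} {Mg Mh : ℝ}
    (hg : ∀ t, 0 ≤ t → |g t| ≤ Mg) (hh : ∀ t, 0 ≤ t → |h t| ≤ Mh) :
    ∀ t, 0 ≤ t → |g t * h t| ≤ Mg * Mh := fun t ht => by
  rw [abs_mul]
  exact mul_le_mul (hg t ht) (hh t ht) (abs_nonneg _) (le_trans (abs_nonneg _) (hg t ht))

set_option maxHeartbeats 1000000 in
/-- Growth dichotomy for the plant growth model with `v/σ < y_f`: either the shoot
length `L(t)` grows without bound, or the growth stops: there are a stopping time
`T* > 0` and a final length `L*` with `L(t) = L*` for all `t ≥ T*`, and in the latter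
case the nutrient and hormone concentrations converge to `σ/γ` and `v/σ`. -/
theorem plant_growth_dichotomy
    (γ σ v yf : ℝ) (hγ : 0 < γ) (hσ : 0 < σ) (hv : 0 < v) (hyf : 0 < yf)
    (hthreshold : v / σ < yf)
    (f : ℝ → ℝ) (hf : Continuous f) (hmono : Monotone f)
    (hf0 : ∀ y, y ≤ yf → f y = 0) (hfpos : ∀ y, yf < y → 0 < f y)
    (x y L : ℝ → ℝ)
    (hx : ∀ t, 0 ≤ t → HasDerivAt x ((1 / L t) * (v - γ * x t * y t)) t)
    (hy : ∀ t, 0 ≤ t → HasDerivAt y (γ * x t * y t - σ * y t) t)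
    (hL : ∀ t, 0 ≤ t → HasDerivAt L (f (y t)) t)
    (hx0 : 0 < x 0) (hy0 : 0 < y 0) (hL0 : 0 < L 0) :
    Tendsto L atTop atTop ∨
      ∃ Tstar > (0 : ℝ), ∃ Lstar > (0 : ℝ),
        (∀ t, Tstar ≤ t → L t = Lstar) ∧
        Tendsto x atTop (nhds (σ / γ)) ∧
        Tendsto y atTop (nhds (v / σ)) := by
  have hγ0 : γ ≠ 0 := ne_of_gt hγ
  have hσ0 : σ ≠ 0 := ne_of_gt hσ
  have hfnn : ∀ z, 0 ≤ f z := by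
    intro z
    rcases le_or_gt z yf with h | h
    · exact (hf0 z h).ge
    · exact (hfpos z h).le
  have hLmono : ∀ s t, 0 ≤ s → s ≤ t → L s ≤ L t :=
    pg_mono_of_deriv_nonneg hL (fun t _ => hfnn (y t))
  have hLpos : ∀ t, 0 ≤ t → 0 < L t := fun t ht =>
    lt_of_lt_of_le hL0 (hLmono 0 t le_rfl ht)
  by_cases hB : ∃ C, ∀ t, 0 ≤ t → L t ≤ C
  swap
  · left
    push_neg at hB
    rw [tendsto_atTop]
    intro b
    obtain ⟨t0, ht0, hbt⟩ := hB b
    filter_upwards [eventually_ge_atTop t0] with t ht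
    have h1 := hLmono t0 t ht0 ht
    linarith
  · right
    obtain ⟨C, hC⟩ := hB
    -- positivity of y
    have hxcmax : ∀ s : ℝ, ContinuousAt (fun u : ℝ => x (max u 0)) s := by
      intro s
      exact ContinuousAt.comp ((hx _ (le_max_right s 0)).continuousAt)
        (Continuous.continuousAt (continuous_id.max continuous_const))
    set g0 : ℝ → ℝ := fun s => γ * x (max s 0) - σ with hg0def
    have hg0c : Continuous g0 := by
      apply Continuous.sub _ continuous_const
      exact Continuous.mul continuous_const (continuous_iff_continuousAt.mpr hxcmax)
    set G : ℝ → ℝ := fun t => ∫ s in (0:ℝ)..t, g0 s with hGdef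
    have hGd : ∀ t : ℝ, HasDerivAt G (g0 t) t := fun t =>
      intervalIntegral.integral_hasDerivAt_right (hg0c.intervalIntegrable 0 t)
        (hg0c.stronglyMeasurableAtFilter _ _) hg0c.continuousAt
    have hyeq : ∀ t, 0 ≤ t → y t * Real.exp (-G t) = y 0 := by
      have hd : ∀ t, 0 ≤ t → HasDerivAt (fun u => y u * Real.exp (-G u)) 0 t := by
        intro t ht
        have h1 : HasDerivAt (fun u => Real.exp (-G u)) (Real.exp (-G t) * -(g0 t)) t :=
          ((hGd t).neg).exp
        have h2 := (hy t ht).mul h1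
        refine h2.congr_deriv ?_
        have hmax : max t 0 = t := max_eq_left ht
        simp only [hg0def, hmax]
        ring
      intro t ht
      have h3 := pg_const_of_deriv_zero hd t ht
      simpa [hGdef, intervalIntegral.integral_same] using h3
    have hypos : ∀ t, 0 ≤ t → 0 < y t := by
      intro t ht
      have h := hyeq t ht
      have he : 0 < Real.exp (-G t) := Real.exp_pos _
      nlinarith [hy0]
    -- equilibrium values
    set xs := σ / γ with hxsdef
    set ys := v / σ with hysdef
    have hxsp : 0 < xs := div_pos hσ hγ
    have hysp : 0 < ys := div_pos hv hσ
    have hvγ : v = γ * xs * ys := by rw [hxsdef, hysdef]; field_simp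
    have hσγ : σ = γ * xs := by rw [hxsdef]; field_simp
    -- Lyapunov function
    set V : ℝ → ℝ := fun t => (x t - xs)^2/2 + xs * Gfn ys (y t) / L t with hVdef
    set W : ℝ → ℝ := fun t =>
      -(γ * y t * (x t - xs)^2 / L t) - xs * Gfn ys (y t) * f (y t) / (L t)^2 with hWdef
    have hVd : ∀ t, 0 ≤ t → HasDerivAt V (W t) t := by
      intro t ht
      have hLt := hLpos t ht
      have hyt := hypos t ht
      have hp : HasDerivAt (fun u => (x u - xs)^2/2)
          ((x t - xs) * ((1 / L t) * (v - γ * x t * y t))) t := by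
        have h1 := (((hx t ht).sub_const xs).pow 2).div_const 2
        refine h1.congr_deriv ?_
        ring
      have hn : HasDerivAt (fun u => xs * Gfn ys (y u))
          (xs * ((1 - ys / y t) * (γ * x t * y t - σ * y t))) t := by
        have h1 := HasDerivAt.comp t (Gfn_deriv hysp hyt) (hy t ht)
        exact h1.const_mul xs
      have hq := hn.div (hL t ht) (ne_of_gt hLt)
      have hsum := hp.add hq
      refine hsum.congr_deriv ?_
      rw [hWdef]
      simp only
      rw [hvγ, hσγ]
      field_simp
      ring
    have hWnp : ∀ t, 0 ≤ t → W t ≤ 0 := by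
      intro t ht
      have h1 : 0 ≤ γ * y t * (x t - xs)^2 / L t :=
        div_nonneg (mul_nonneg (mul_nonneg hγ.le (hypos t ht).le) (sq_nonneg _))
          (hLpos t ht).le
      have h2 : 0 ≤ xs * Gfn ys (y t) * f (y t) / (L t)^2 :=
        div_nonneg (mul_nonneg (mul_nonneg hxsp.le (Gfn_nonneg hysp (hypos t ht)))
          (hfnn _)) (sq_nonneg _)
      rw [hWdef]
      simp only
      linarith
    have hVanti : ∀ s t, 0 ≤ s → s ≤ t → V t ≤ V s := by
      intro s t hs hst
      have h := pg_mono_of_deriv_nonneg (g := fun u => -V u) (g' := fun u => -W u)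
        (fun u hu => (hVd u hu).neg)
        (fun u hu => by show 0 ≤ -W u; linarith [hWnp u hu]) s t hs hst
      linarith
    have hVnn : ∀ t, 0 ≤ t → 0 ≤ V t := by
      intro t ht
      have h2 : 0 ≤ xs * Gfn ys (y t) / L t :=
        div_nonneg (mul_nonneg hxsp.le (Gfn_nonneg hysp (hypos t ht))) (hLpos t ht).le
      rw [hVdef]
      simp only
      nlinarith [sq_nonneg (x t - xs)]
    -- quantitative bounds
    set V0 := V 0 with hV0def
    have hV0nn : 0 ≤ V0 := hVnn 0 le_rfl
    have hVle : ∀ t, 0 ≤ t → V t ≤ V0 := fun t ht => hVanti 0 t le_rfl ht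
    have hGnn : ∀ t, 0 ≤ t → 0 ≤ Gfn ys (y t) := fun t ht => Gfn_nonneg hysp (hypos t ht)
    have hsqbd : ∀ t, 0 ≤ t → (x t - xs)^2 ≤ 2*V0 := by
      intro t ht
      have h1 := hVle t ht
      have h2 : 0 ≤ xs * Gfn ys (y t) / L t :=
        div_nonneg (mul_nonneg hxsp.le (hGnn t ht)) (hLpos t ht).le
      rw [hVdef] at h1
      simp only at h1
      clear_value V0
      nlinarith
    set Bx := Real.sqrt (2*V0) with hBxdef
    have hxbd : ∀ t, 0 ≤ t → |x t - xs| ≤ Bx := by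
      intro t ht
      rw [← Real.sqrt_sq_eq_abs]
      exact Real.sqrt_le_sqrt (hsqbd t ht)
    set Mx := xs + Bx with hMxdef
    have hxabs : ∀ t, 0 ≤ t → |x t| ≤ Mx := by
      intro t ht
      have h1 := hxbd t ht
      have h2 : |x t| - |xs| ≤ |x t - xs| := abs_sub_abs_le_abs_sub _ _
      rw [abs_of_pos hxsp] at h2
      rw [hMxdef]; linarith
    have hCpos : 0 < C := lt_of_lt_of_le (hLpos 0 le_rfl) (hC 0 le_rfl)
    have hGbd : ∀ t, 0 ≤ t → Gfn ys (y t) ≤ V0 * C / xs := by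
      intro t ht
      have h1 : xs * Gfn ys (y t) / L t ≤ V0 := by
        have h2 := hVle t ht
        rw [hVdef] at h2; simp only at h2
        nlinarith [sq_nonneg (x t - xs)]
      rw [div_le_iff₀ (hLpos t ht)] at h1
      have h3 : V0 * L t ≤ V0 * C := mul_le_mul_of_nonneg_left (hC t ht) hV0nn
      rw [le_div_iff₀ hxsp]
      nlinarith
    set CG := V0 * C / xs with hCGdef
    have hCGnn : 0 ≤ CG := by positivity
    set ymin := ys * Real.exp (-(CG + ys)/ys) with hymindef
    have hyminpos : 0 < ymin := by positivity
    have hymin : ∀ t, 0 ≤ t → ymin ≤ y t := fun t ht =>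
      Gfn_lb_small hysp (hypos t ht) (hGbd t ht)
    set ymax := (Real.sqrt ys + Real.sqrt CG)^2 with hymaxdef
    have hymax : ∀ t, 0 ≤ t → y t ≤ ymax := fun t ht =>
      Gfn_ub hysp (hypos t ht) hCGnn (le_trans (Gfn_ge_sq hysp (hypos t ht)) (hGbd t ht))
    have hymaxpos : 0 < ymax := lt_of_lt_of_le (hypos 0 le_rfl) (hymax 0 le_rfl)
    have hyabs : ∀ t, 0 ≤ t → |y t| ≤ ymax := fun t ht => by
      rw [abs_of_pos (hypos t ht)]; exact hymax t ht
    have hfbd : ∀ t, 0 ≤ t → |f (y t)| ≤ f ymax := fun t ht => by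
      rw [abs_of_nonneg (hfnn _)]; exact hmono (hymax t ht)
    have hfymaxnn : 0 ≤ f ymax := hfnn ymax
    -- Lipschitz bounds
    have hinvLbd : ∀ t, 0 ≤ t → |1 / L t| ≤ 1 / L 0 := fun t ht => by
      rw [abs_of_pos (one_div_pos.mpr (hLpos t ht))]
      exact one_div_le_one_div_of_le hL0 (hLmono 0 t le_rfl ht)
    have hxdbd : ∀ t, 0 ≤ t → |(1 / L t) * (v - γ * x t * y t)| ≤
        (1 / L 0) * (v + γ * Mx * ymax) := by
      intro t ht
      rw [abs_mul]
      apply mul_le_mul (hinvLbd t ht) _ (abs_nonneg _) (by positivity)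
      calc |v - γ * x t * y t| ≤ |v| + |γ * x t * y t| := abs_sub _ _
        _ ≤ v + γ * Mx * ymax := by
            rw [abs_of_pos hv, abs_mul, abs_mul, abs_of_pos hγ]
            have h1 := hxabs t ht
            have h2 := hyabs t ht
            have h3 : |x t| * |y t| ≤ Mx * ymax :=
              mul_le_mul h1 h2 (abs_nonneg _) (le_trans (abs_nonneg _) h1)
            have h4 := mul_le_mul_of_nonneg_left h3 hγ.le
            linarith [mul_assoc γ (|x t|) (|y t|), mul_assoc γ Mx ymax]
    have hxlip := pg_lip_of_deriv hx hxdbd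
    have hydbd : ∀ t, 0 ≤ t → |γ * x t * y t - σ * y t| ≤ γ * Mx * ymax + σ * ymax := by
      intro t ht
      calc |γ * x t * y t - σ * y t| ≤ |γ * x t * y t| + |σ * y t| := abs_sub _ _
        _ ≤ γ * Mx * ymax + σ * ymax := by
            rw [abs_mul, abs_mul, abs_mul, abs_of_pos hγ, abs_of_pos hσ]
            have h1 := hxabs t ht
            have h2 := hyabs t ht
            have h3 : |x t| * |y t| ≤ Mx * ymax :=
              mul_le_mul h1 h2 (abs_nonneg _) (le_trans (abs_nonneg _) h1)
            have h4 := mul_le_mul_of_nonneg_left h3 hγ.le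
            have h5 := mul_le_mul_of_nonneg_left h2 hσ.le
            nlinarith
    have hylip := pg_lip_of_deriv hy hydbd
    have hLlip := pg_lip_of_deriv hL hfbd
    -- uniform continuity facts
    have hucx : UC0 x := pg_uc_of_lip hxlip
    have hucy : UC0 y := pg_uc_of_lip hylip
    have hinvlip : ∀ s t, 0 ≤ s → 0 ≤ t →
        |1 / L s - 1 / L t| ≤ (f ymax / (L 0 * L 0)) * |s - t| := by
      intro s t hs ht
      have hLs := hLpos s hs
      have hLt := hLpos t ht
      have h1 : 1 / L s - 1 / L t = (L t - L s) / (L s * L t) := by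
        field_simp
      rw [h1, abs_div, abs_of_pos (mul_pos hLs hLt)]
      have h2 : |L t - L s| ≤ f ymax * |t - s| := hLlip t s ht hs
      have h3 : L 0 * L 0 ≤ L s * L t :=
        mul_le_mul (hLmono 0 s le_rfl hs) (hLmono 0 t le_rfl ht) hL0.le hLs.le
      calc |L t - L s| / (L s * L t) ≤ (f ymax * |t - s|) / (L 0 * L 0) := by
            apply div_le_div₀ (by positivity) h2 (by positivity) h3
        _ = (f ymax / (L 0 * L 0)) * |s - t| := by rw [abs_sub_comm]; ring
    have hucinv : UC0 (fun t => 1 / L t) := pg_uc_of_lip hinvlip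
    have hGflip : ∀ s t, 0 ≤ s → 0 ≤ t → |Gfn ys (y s) - Gfn ys (y t)| ≤
        ((1 + ys/ymin) * (γ * Mx * ymax + σ * ymax)) * |s - t| := by
      intro s t hs ht
      have h0 : (0:ℝ) ≤ 1 + ys / ymin := by
        have := div_nonneg hysp.le hyminpos.le
        linarith
      calc |Gfn ys (y s) - Gfn ys (y t)| ≤ (1 + ys/ymin) * |y s - y t| :=
            Gfn_lip hysp hyminpos (y s) (y t) (hymin s hs) (hymin t ht)
        _ ≤ (1 + ys/ymin) * ((γ * Mx * ymax + σ * ymax) * |s - t|) :=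
            mul_le_mul_of_nonneg_left (hylip s t hs ht) h0
        _ = _ := by ring
    have hucGf : UC0 (fun t => Gfn ys (y t)) := pg_uc_of_lip hGflip
    have hucfy : UC0 (fun t => f (y t)) :=
      pg_uc_comp_cont hf hylip (fun t ht => ⟨hymin t ht, hymax t ht⟩)
    have hucxm : UC0 (fun t => x t - xs) := by
      apply pg_uc_of_lip (K := (1 / L 0) * (v + γ * Mx * ymax))
      intro s t hs ht
      have h1 := hxlip s t hs ht
      calc |x s - xs - (x t - xs)| = |x s - x t| := by ring_nf
        _ ≤ _ := h1
    have hucγy : UC0 (fun t => γ * y t) := by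
      apply pg_uc_of_lip (K := γ * (γ * Mx * ymax + σ * ymax))
      intro s t hs ht
      have h1 := hylip s t hs ht
      have he : γ * y s - γ * y t = γ * (y s - y t) := by ring
      calc |γ * y s - γ * y t| = γ * |y s - y t| := by
            rw [he, abs_mul, abs_of_pos hγ]
        _ ≤ γ * ((γ * Mx * ymax + σ * ymax) * |s - t|) :=
            mul_le_mul_of_nonneg_left h1 hγ.le
        _ = _ := by ring
    have hγybd : ∀ t, 0 ≤ t → |γ * y t| ≤ γ * ymax := by
      intro t ht
      rw [abs_mul, abs_of_pos hγ]
      exact mul_le_mul_of_nonneg_left (hyabs t ht) hγ.le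
    have hGfabs : ∀ t, 0 ≤ t → |Gfn ys (y t)| ≤ CG := by
      intro t ht
      rw [abs_of_nonneg (hGnn t ht)]
      exact hGbd t ht
    -- UC0 of W
    have hucW : UC0 W := by
      have hu2 : UC0 (fun t => (x t - xs) * (x t - xs)) :=
        pg_uc_mul_bdd hucxm hucxm hxbd hxbd
      have hb2 : ∀ t, 0 ≤ t → |(x t - xs) * (x t - xs)| ≤ Bx * Bx :=
        pg_abs_mul_le hxbd hxbd
      have huA : UC0 (fun t => (γ * y t) * ((x t - xs) * (x t - xs))) :=
        pg_uc_mul_bdd hucγy hu2 hγybd hb2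
      have hbA : ∀ t, 0 ≤ t → |(γ * y t) * ((x t - xs) * (x t - xs))| ≤ γ * ymax * (Bx * Bx) :=
        pg_abs_mul_le hγybd hb2
      have huA' : UC0 (fun t => ((γ * y t) * ((x t - xs) * (x t - xs))) * (1 / L t)) :=
        pg_uc_mul_bdd huA hucinv hbA hinvLbd
      have huB1 : UC0 (fun t => Gfn ys (y t) * f (y t)) :=
        pg_uc_mul_bdd hucGf hucfy hGfabs hfbd
      have hbB1 : ∀ t, 0 ≤ t → |Gfn ys (y t) * f (y t)| ≤ CG * f ymax :=
        pg_abs_mul_le hGfabs hfbd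
      have huB2 : UC0 (fun t => (Gfn ys (y t) * f (y t)) * (1 / L t)) :=
        pg_uc_mul_bdd huB1 hucinv hbB1 hinvLbd
      have hbB2 : ∀ t, 0 ≤ t → |(Gfn ys (y t) * f (y t)) * (1 / L t)| ≤ (CG * f ymax) * (1 / L 0) :=
        pg_abs_mul_le hbB1 hinvLbd
      have huB3 : UC0 (fun t => ((Gfn ys (y t) * f (y t)) * (1 / L t)) * (1 / L t)) :=
        pg_uc_mul_bdd huB2 hucinv hbB2 hinvLbd
      have hbB3 : ∀ t, 0 ≤ t → |((Gfn ys (y t) * f (y t)) * (1 / L t)) * (1 / L t)| ≤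
          ((CG * f ymax) * (1 / L 0)) * (1 / L 0) := pg_abs_mul_le hbB2 hinvLbd
      have hconst : UC0 (fun _ : ℝ => -xs) := pg_uc_const (-xs)
      have hbconst : ∀ t : ℝ, 0 ≤ t → |(fun _ : ℝ => -xs) t| ≤ xs := by
        intro t ht
        simp only [abs_neg, abs_of_pos hxsp]
        exact le_rfl
      have huB4 : UC0 (fun t => (-xs) * (((Gfn ys (y t) * f (y t)) * (1 / L t)) * (1 / L t))) :=
        pg_uc_mul_bdd hconst huB3 hbconst hbB3
      have huE : UC0 (fun t => -(((γ * y t) * ((x t - xs) * (x t - xs))) * (1 / L t)) +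
          (-xs) * (((Gfn ys (y t) * f (y t)) * (1 / L t)) * (1 / L t))) :=
        pg_uc_add (pg_uc_neg huA') huB4
      have heq : W = fun t => -(((γ * y t) * ((x t - xs) * (x t - xs))) * (1 / L t)) +
          (-xs) * (((Gfn ys (y t) * f (y t)) * (1 / L t)) * (1 / L t)) := by
        rw [hWdef]
        funext t
        ring
      rw [heq]
      exact huE
    -- convergence of V, first Barbalat application
    obtain ⟨c, hVconv⟩ := pg_tendsto_of_anti hVanti hVnn
    have hWto0 : Tendsto W atTop (nhds 0) := pg_barbalat hVd hucW hVconv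
    set A : ℝ → ℝ := fun t => γ * y t * (x t - xs)^2 / L t with hAdef
    have hAnn : ∀ t, 0 ≤ t → 0 ≤ A t := fun t ht =>
      div_nonneg (mul_nonneg (mul_nonneg hγ.le (hypos t ht).le) (sq_nonneg _)) (hLpos t ht).le
    have hA0 : Tendsto A atTop (nhds 0) := by
      refine squeeze_zero' (g := fun t => -W t) ?_ ?_ ?_
      · filter_upwards [eventually_ge_atTop (0:ℝ)] with t ht
        exact hAnn t ht
      · filter_upwards [eventually_ge_atTop (0:ℝ)] with t ht
        have h2 : 0 ≤ xs * Gfn ys (y t) * f (y t) / (L t)^2 :=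
          div_nonneg (mul_nonneg (mul_nonneg hxsp.le (hGnn t ht)) (hfnn _)) (sq_nonneg _)
        show A t ≤ -W t
        rw [hAdef, hWdef]
        simp only
        linarith
      · have h := hWto0.neg
        rwa [neg_zero] at h
    have hsq0 : Tendsto (fun t => (x t - xs)^2) atTop (nhds 0) := by
      refine squeeze_zero' (g := fun t => C/(γ*ymin) * A t) ?_ ?_ ?_
      · filter_upwards [eventually_ge_atTop (0:ℝ)] with t ht
        exact sq_nonneg _
      · filter_upwards [eventually_ge_atTop (0:ℝ)] with t ht
        show (x t - xs)^2 ≤ C/(γ*ymin) * A t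
        have hnum : γ * ymin * (x t - xs)^2 ≤ γ * y t * (x t - xs)^2 :=
          mul_le_mul_of_nonneg_right (mul_le_mul_of_nonneg_left (hymin t ht) hγ.le) (sq_nonneg _)
        have hAge : γ * ymin * (x t - xs)^2 / C ≤ A t := by
          rw [hAdef]
          simp only
          exact div_le_div₀ (mul_nonneg (mul_nonneg hγ.le (hypos t ht).le) (sq_nonneg _))
            hnum (hLpos t ht) (hC t ht)
        have hpos : 0 < C/(γ*ymin) := div_pos hCpos (mul_pos hγ hyminpos)
        have hmul := mul_le_mul_of_nonneg_left hAge hpos.le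
        have hid : C/(γ*ymin) * (γ * ymin * (x t - xs)^2 / C) = (x t - xs)^2 := by
          field_simp
        linarith
      · have h := hA0.const_mul (C/(γ*ymin))
        rwa [mul_zero] at h
    have hxconv : Tendsto x atTop (nhds xs) := by
      have h1 : Tendsto (fun t => Real.sqrt ((x t - xs)^2)) atTop (nhds (Real.sqrt 0)) := by
        have := Filter.Tendsto.comp (Real.continuous_sqrt.continuousAt) hsq0
        exact this
      rw [Real.sqrt_zero] at h1
      simp only [Real.sqrt_sq_eq_abs] at h1
      have h2 : Tendsto (fun t => x t - xs) atTop (nhds 0) := by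
        rw [tendsto_zero_iff_norm_tendsto_zero]
        simpa [Real.norm_eq_abs] using h1
      have h3 := h2.add_const xs
      rw [zero_add] at h3
      have heq : (fun t => x t - xs + xs) = x := by funext t; ring
      rwa [heq] at h3
    -- second Barbalat application: x' → 0
    have hnumbd : ∀ t, 0 ≤ t → |v - γ * x t * y t| ≤ v + γ * Mx * ymax := by
      intro t ht
      calc |v - γ * x t * y t| ≤ |v| + |γ * x t * y t| := abs_sub _ _
        _ ≤ v + γ * Mx * ymax := by
            rw [abs_of_pos hv, abs_mul, abs_mul, abs_of_pos hγ]
            have h1 := hxabs t ht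
            have h2 := hyabs t ht
            have h3 : |x t| * |y t| ≤ Mx * ymax :=
              mul_le_mul h1 h2 (abs_nonneg _) (le_trans (abs_nonneg _) h1)
            have h4 := mul_le_mul_of_nonneg_left h3 hγ.le
            linarith [mul_assoc γ (|x t|) (|y t|), mul_assoc γ Mx ymax]
    have hucγxy : UC0 (fun t => (γ * y t) * x t) :=
      pg_uc_mul_bdd hucγy hucx hγybd hxabs
    have hucnum : UC0 (fun t => v - γ * x t * y t) := by
      have h1 : UC0 (fun t => v + -((γ * y t) * x t)) :=
        pg_uc_add (pg_uc_const v) (pg_uc_neg hucγxy)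
      have heq : (fun t => v + -((γ * y t) * x t)) = (fun t => v - γ * x t * y t) := by
        funext t
        ring
      rwa [heq] at h1
    have hucx' : UC0 (fun t => (1 / L t) * (v - γ * x t * y t)) :=
      pg_uc_mul_bdd hucinv hucnum hinvLbd hnumbd
    have hx'0 : Tendsto (fun t => (1 / L t) * (v - γ * x t * y t)) atTop (nhds 0) :=
      pg_barbalat (fun t ht => hx t ht) hucx' hxconv
    have hnum0 : Tendsto (fun t => v - γ * x t * y t) atTop (nhds 0) := by
      rw [tendsto_zero_iff_norm_tendsto_zero]
      refine squeeze_zero' (g := fun t => C * |(1 / L t) * (v - γ * x t * y t)|) ?_ ?_ ?_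
      · filter_upwards [eventually_ge_atTop (0:ℝ)] with t ht
        exact norm_nonneg _
      · filter_upwards [eventually_ge_atTop (0:ℝ)] with t ht
        have hLt := hLpos t ht
        show ‖v - γ * x t * y t‖ ≤ C * |(1 / L t) * (v - γ * x t * y t)|
        rw [Real.norm_eq_abs, abs_mul, abs_of_pos (one_div_pos.mpr hLt)]
        have hge : (1:ℝ) ≤ C / L t := (one_le_div hLt).mpr (hC t ht)
        have h2 : |v - γ * x t * y t| ≤ C / L t * |v - γ * x t * y t| := by
          nlinarith [abs_nonneg (v - γ * x t * y t)]
        calc |v - γ * x t * y t| ≤ C / L t * |v - γ * x t * y t| := h2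
          _ = C * (1 / L t * |v - γ * x t * y t|) := by ring
      · have h1 : Tendsto (fun t => |(1 / L t) * (v - γ * x t * y t)|) atTop (nhds 0) := by
          have h0 := tendsto_zero_iff_norm_tendsto_zero.mp hx'0
          simp only [Real.norm_eq_abs] at h0
          exact h0
        have h2 := h1.const_mul C
        rwa [mul_zero] at h2
    have hγxyv : Tendsto (fun t => γ * x t * y t) atTop (nhds v) := by
      have h := (tendsto_const_nhds (x := v) (f := atTop)).sub hnum0
      rw [sub_zero] at h
      have heq : (fun t => v - (v - γ * x t * y t)) = fun t => γ * x t * y t := by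
        funext t
        ring
      rwa [heq] at h
    have hden : Tendsto (fun t => γ * x t) atTop (nhds σ) := by
      have h := hxconv.const_mul γ
      rwa [← hσγ] at h
    have hyconv : Tendsto y atTop (nhds ys) := by
      have hdiv := hγxyv.div hden hσ0
      have hxev : ∀ᶠ t in atTop, xs/2 < x t :=
        (tendsto_order.1 hxconv).1 (xs/2) (by linarith)
      rw [hysdef]
      apply Tendsto.congr' ?_ hdiv
      filter_upwards [hxev] with t hxt
      have hxne : γ * x t ≠ 0 := by
        have : 0 < x t := lt_trans (by linarith) hxt
        positivity
      exact mul_div_cancel_left₀ (y t) hxne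
    -- growth stops
    have hylt : ∀ᶠ t in atTop, y t < yf := (tendsto_order.1 hyconv).2 yf hthreshold
    obtain ⟨T, hT⟩ := eventually_atTop.mp hylt
    have hT1 : (0:ℝ) < max T 1 := lt_of_lt_of_le one_pos (le_max_right T 1)
    refine ⟨max T 1, hT1, L (max T 1), hLpos _ hT1.le, ?_, hxconv, hyconv⟩
    intro t ht
    have hzero : ∀ u, max T 1 ≤ u → HasDerivAt L 0 u := by
      intro u hu
      have h0u : (0:ℝ) ≤ u := le_trans hT1.le hu
      have hd := hL u h0u
      rwa [hf0 (y u) (le_of_lt (hT u (le_trans (le_max_left T 1) hu)))] at hd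
    exact pg_const_of_deriv_zero hzero t ht
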